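/- With u drawn from a (κ, X^{s,q}) Besov measure via a sufficiently regular wavelet basis, for any t < s - d/q and any γ ≥ 1 with d/(γq) < s - d/q - t, one has E[‖u‖_{B^{t}_{γq,γq}}^{γq}] < ∞, and consequently E[‖u‖_{C^t(𝕋^d)}] < ∞ and u ∈ C^t almost surely. -/

import Mathlib

open MeasureTheory Real ProbabilityTheory Set

private lemma integrable_comp_abs' {g : ℝ → ℝ} (hg : IntegrableOn (fun x => g |x|) (Ioi 0)) :
    Integrable (fun x => g |x|) := by
  have int_Iic : IntegrableOn (fun x ↦ g |x|) (Iic 0) := by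
    rw [← Measure.map_neg_eq_self (volume : Measure ℝ)]
    have m : MeasurableEmbedding fun x : ℝ => -x := (Homeomorph.neg ℝ).measurableEmbedding
    rw [m.integrableOn_map_iff]
    simp_rw [Function.comp_def, abs_neg, neg_preimage, neg_Iic, neg_zero]
    exact Iff.mpr integrableOn_Ici_iff_integrableOn_Ioi hg
  have h := int_Iic.union hg
  rwa [Iic_union_Ioi, integrableOn_univ] at h


/-- with u drawn from a (κ, X^{s,q}) Besov measure, for t < s - d/q and
γ ≥ 1 with d/(γq) < s - d/q - t, one has E‖u‖_{B^t_{γq,γq}}^{γq} < ∞, and consequently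
E‖u‖_{C^t} < ∞ and u ∈ C^t almost surely (the C^t = B^t_{∞,∞} norm of the draw being
sup_l l^{(t-s)/d+1/q} κ^{-1/q}|ξ_l|). -/
theorem besov_moment_and_holder
    {Ω : Type*} [MeasurableSpace Ω] (P : Measure Ω) [IsProbabilityMeasure P]
    (q s t κ : ℝ) (d : ℕ) (hd : 1 ≤ d) (hq : 1 ≤ q) (hs : 0 < s) (hκ : 0 < κ)
    (ht : t < s - (d : ℝ) / q)
    (γ : ℝ) (hγ : 1 ≤ γ) (hγ2 : (d : ℝ) / (γ * q) < s - (d : ℝ) / q - t)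
    (c : ℝ) (hc : 0 < c)
    (ξ : ℕ → Ω → ℝ) (hmeas : ∀ l, Measurable (ξ l))
    (hindep : iIndepFun ξ P)
    (hdens : ∀ l, Measure.map (ξ l) P
      = volume.withDensity (fun x => ENNReal.ofReal (c * Real.exp (-(|x| ^ q) / 2)))) :
    (Integrable (fun ω => ∑' n : ℕ,
        ((n : ℝ) + 1) ^ (t * (γ * q) / (d : ℝ) + (γ * q) / 2 - 1) *
          |((n : ℝ) + 1) ^ (-(s / (d : ℝ) + 1 / 2 - 1 / q)) * κ ^ (-(1 / q)) * ξ n ω| ^ (γ * q)) P)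
    ∧ (Integrable (fun ω =>
        ⨆ n : ℕ, ((n : ℝ) + 1) ^ ((t - s) / (d : ℝ) + 1 / q) * κ ^ (-(1 / q)) * |ξ n ω|) P)
    ∧ (∀ᵐ ω ∂P, BddAbove (Set.range fun n : ℕ =>
        ((n : ℝ) + 1) ^ ((t - s) / (d : ℝ) + 1 / q) * κ ^ (-(1 / q)) * |ξ n ω|)) := by
  classical
  have hd0 : (0:ℝ) < d := by
    have : (1:ℝ) ≤ d := by exact_mod_cast hd
    linarith
  have hdne : (d:ℝ) ≠ 0 := hd0.ne'
  have hq0 : (0:ℝ) < q := by linarith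
  have hqne : q ≠ 0 := hq0.ne'
  have hγ0 : (0:ℝ) < γ := by linarith
  set p : ℝ := γ * q with hp_def
  have hp1 : 1 ≤ p := by nlinarith
  have hp0 : 0 < p := by linarith
  set κ' : ℝ := κ ^ (-(1/q)) with hκ'_def
  have hκ'0 : 0 < κ' := Real.rpow_pos_of_pos hκ _
  set K : ℝ := κ' ^ p with hK_def
  have hK0 : 0 < K := Real.rpow_pos_of_pos hκ'0 _
  set e : ℝ := (t - s) / (d:ℝ) + 1 / q with he_def
  -- exponent arithmetic
  have hep : e * p < -1 := by
    have h4 : (d:ℝ) / p < s - (d:ℝ)/q - t := hγ2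
    have h7 : (d:ℝ) < (s - (d:ℝ)/q - t) * p := (div_lt_iff₀ hp0).mp h4
    rw [he_def, ← mul_lt_mul_iff_of_pos_right hd0]
    have hexpand : ((t - s)/(d:ℝ) + 1/q) * p * (d:ℝ) = (t - s) * p + (d:ℝ)/q * p := by
      field_simp
    rw [hexpand]
    nlinarith [h7]
  have hβ1 : e * p - 1 < -1 := by linarith
  have hexp : t * p / (d:ℝ) + p / 2 - 1 + -(s / (d:ℝ) + 1 / 2 - 1 / q) * p = e * p - 1 := by
    rw [he_def]; field_simp; ring
  -- pointwise algebra
  have habs : ∀ (n : ℕ) (x : ℝ) (β : ℝ),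
      (((n:ℝ)+1) ^ β * κ' * |x|) ^ p = ((n:ℝ)+1) ^ (β * p) * K * |x| ^ p := by
    intro n x β
    have hn0 : (0:ℝ) < (n:ℝ)+1 := by positivity
    rw [Real.mul_rpow (by positivity) (abs_nonneg x),
        Real.mul_rpow (Real.rpow_nonneg hn0.le _) hκ'0.le,
        ← Real.rpow_mul hn0.le, ← hK_def]
  have hsum_eq : ∀ (n : ℕ) (x : ℝ),
      ((n:ℝ)+1) ^ (t * p / (d:ℝ) + p / 2 - 1) *
        |((n:ℝ)+1) ^ (-(s / (d:ℝ) + 1 / 2 - 1 / q)) * κ' * x| ^ p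
      = ((n:ℝ)+1) ^ (e * p - 1) * K * |x| ^ p := by
    intro n x
    have hn0 : (0:ℝ) < (n:ℝ)+1 := by positivity
    rw [abs_mul, abs_mul, abs_of_pos (Real.rpow_pos_of_pos hn0 _), abs_of_pos hκ'0,
        habs n x _, ← mul_assoc, ← mul_assoc, ← Real.rpow_add hn0, hexp]
  have hnonneg : ∀ (β : ℝ) (n : ℕ) (x : ℝ), 0 ≤ ((n:ℝ)+1) ^ β * K * |x| ^ p := fun β n x =>
    mul_nonneg (mul_nonneg (Real.rpow_nonneg (by positivity) _) hK0.le)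
      (Real.rpow_nonneg (abs_nonneg _) _)
  -- the density and moment
  set w : ℝ → ENNReal := fun x => ENNReal.ofReal (c * Real.exp (-(|x| ^ q) / 2)) with hw_def
  have hw_meas : Measurable w := by
    apply Measurable.ennreal_ofReal
    exact (Real.measurable_exp.comp
      ((((Real.continuous_rpow_const hq0.le).measurable.comp measurable_abs).neg).div_const
        2)).const_mul c
  have habs_p_meas : Measurable fun x : ℝ => ENNReal.ofReal (|x| ^ p) :=
    ((Real.continuous_rpow_const hp0.le).measurable.comp measurable_abs).ennreal_ofReal
  set M : ENNReal := ∫⁻ x, ENNReal.ofReal (|x| ^ p) ∂(volume.withDensity w) with hM_def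
  have hInt : Integrable (fun x : ℝ => c * Real.exp (-(|x| ^ q) / 2) * |x| ^ p) := by
    refine integrable_comp_abs' (g := fun y => c * Real.exp (-(y ^ q) / 2) * y ^ p) ?_
    have h := (integrableOn_rpow_mul_exp_neg_mul_rpow (by linarith : (-1:ℝ) < p) hq0
      (by norm_num : (0:ℝ) < 1/2)).const_mul c
    refine IntegrableOn.congr_fun h (fun x hx => ?_) measurableSet_Ioi
    rw [abs_of_pos hx]; ring_nf
  have hM : M ≠ ⊤ := by
    rw [hM_def, lintegral_withDensity_eq_lintegral_mul volume hw_meas habs_p_meas]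
    have heq : ∀ x : ℝ, (w * fun x => ENNReal.ofReal (|x| ^ p)) x
        = ENNReal.ofReal (c * Real.exp (-(|x| ^ q) / 2) * |x| ^ p) := by
      intro x
      simp only [Pi.mul_apply, hw_def]
      rw [← ENNReal.ofReal_mul (by positivity)]
    rw [lintegral_congr heq]
    have h2 := hInt.hasFiniteIntegral
    rw [hasFiniteIntegral_iff_ofReal ?_] at h2
    · exact h2.ne
    · exact Filter.Eventually.of_forall fun x => by positivity
  have hmom_n : ∀ n, ∫⁻ ω, ENNReal.ofReal (|ξ n ω| ^ p) ∂P = M := by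
    intro n
    rw [hM_def, ← hdens n, lintegral_map habs_p_meas (hmeas n)]
  -- summability of the coefficients
  have hsummable : ∀ β : ℝ, β < -1 → Summable (fun n : ℕ => ((n:ℝ)+1) ^ β) := by
    intro β hβ
    have h := (Real.summable_nat_rpow.mpr hβ).comp_injective Nat.succ_injective
    refine h.congr fun n => ?_
    simp only [Function.comp_apply, Nat.succ_eq_add_one]
    congr 1
    push_cast
    ring
  have hterm_meas : ∀ (β : ℝ) (n : ℕ),
      Measurable fun ω => ENNReal.ofReal (((n:ℝ)+1) ^ β * K * |ξ n ω| ^ p) := fun β n =>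
    ((((Real.continuous_rpow_const hp0.le).measurable.comp
      (hmeas n).abs).const_mul _)).ennreal_ofReal
  -- the key finiteness statement
  have key : ∀ β : ℝ, β < -1 →
      ∫⁻ ω, ∑' n : ℕ, ENNReal.ofReal (((n:ℝ)+1) ^ β * K * |ξ n ω| ^ p) ∂P ≠ ⊤ := by
    intro β hβ
    rw [lintegral_tsum fun n => (hterm_meas β n).aemeasurable]
    have heach : ∀ n : ℕ, ∫⁻ ω, ENNReal.ofReal (((n:ℝ)+1) ^ β * K * |ξ n ω| ^ p) ∂P
        = ENNReal.ofReal (((n:ℝ)+1) ^ β * K) * M := by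
      intro n
      calc ∫⁻ ω, ENNReal.ofReal (((n:ℝ)+1) ^ β * K * |ξ n ω| ^ p) ∂P
          = ∫⁻ ω, ENNReal.ofReal (((n:ℝ)+1) ^ β * K) * ENNReal.ofReal (|ξ n ω| ^ p) ∂P := by
            refine lintegral_congr fun ω => ?_
            rw [← ENNReal.ofReal_mul
              (mul_nonneg (Real.rpow_nonneg (by positivity) _) hK0.le)]
        _ = ENNReal.ofReal (((n:ℝ)+1) ^ β * K) * ∫⁻ ω, ENNReal.ofReal (|ξ n ω| ^ p) ∂P :=
            lintegral_const_mul _ (habs_p_meas.comp (hmeas n))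
        _ = _ := by rw [hmom_n n]
    rw [tsum_congr heach, ENNReal.tsum_mul_right]
    refine ENNReal.mul_ne_top ?_ hM
    rw [← ENNReal.ofReal_tsum_of_nonneg
      (fun n => mul_nonneg (Real.rpow_nonneg (by positivity) _) hK0.le)
      ((hsummable β hβ).mul_right K)]
    exact ENNReal.ofReal_ne_top
  -- first component
  have h1meas : Measurable fun ω =>
      ∑' n : ℕ, ENNReal.ofReal (((n:ℝ)+1) ^ (e * p - 1) * K * |ξ n ω| ^ p) :=
    Measurable.ennreal_tsum (hterm_meas _)
  have hint1 := integrable_toReal_of_lintegral_ne_top h1meas.aemeasurable (key _ hβ1)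
  -- second component preliminaries
  have h2meas : Measurable fun ω =>
      ∑' n : ℕ, ENNReal.ofReal (((n:ℝ)+1) ^ (e * p) * K * |ξ n ω| ^ p) :=
    Measurable.ennreal_tsum (hterm_meas _)
  have hT2 := key (e * p) hep
  have hae : ∀ᵐ ω ∂P,
      (∑' n : ℕ, ENNReal.ofReal (((n:ℝ)+1) ^ (e * p) * K * |ξ n ω| ^ p)) ≠ ⊤ :=
    (ae_lt_top h2meas hT2).mono fun ω h => h.ne
  have hbound : ∀ ω, (∑' n : ℕ, ENNReal.ofReal (((n:ℝ)+1) ^ (e * p) * K * |ξ n ω| ^ p)) ≠ ⊤ →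
      ∀ n : ℕ, ((n:ℝ)+1) ^ e * κ' * |ξ n ω|
        ≤ max 1 ((∑' n : ℕ, ENNReal.ofReal (((n:ℝ)+1) ^ (e * p) * K * |ξ n ω| ^ p)).toReal) := by
    intro ω hω n
    have hn0 : (0:ℝ) < (n:ℝ)+1 := by positivity
    have h1 : (((n:ℝ)+1) ^ e * κ' * |ξ n ω|) ^ p
        ≤ (∑' n : ℕ, ENNReal.ofReal (((n:ℝ)+1) ^ (e * p) * K * |ξ n ω| ^ p)).toReal := by
      have hle := ENNReal.le_tsum
        (f := fun n : ℕ => ENNReal.ofReal (((n:ℝ)+1) ^ (e * p) * K * |ξ n ω| ^ p)) n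
      have h2 := ENNReal.toReal_mono hω hle
      rw [ENNReal.toReal_ofReal (hnonneg _ n _)] at h2
      rw [habs n _ e]
      exact h2
    have hG0 : 0 ≤ ((n:ℝ)+1) ^ e * κ' * |ξ n ω| :=
      mul_nonneg (mul_nonneg (Real.rpow_nonneg hn0.le _) hκ'0.le) (abs_nonneg _)
    rcases le_or_gt (((n:ℝ)+1) ^ e * κ' * |ξ n ω|) 1 with h | h
    · exact le_max_of_le_left h
    · refine le_max_of_le_right ?_
      refine le_trans ?_ h1
      nth_rewrite 1 [← Real.rpow_one (((n:ℝ)+1) ^ e * κ' * |ξ n ω|)]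
      exact Real.rpow_le_rpow_of_exponent_le h.le hp1
  refine ⟨?_, ?_, ?_⟩
  · refine hint1.congr (Filter.Eventually.of_forall fun ω => ?_)
    dsimp only
    rw [ENNReal.tsum_toReal_eq fun n => ENNReal.ofReal_ne_top]
    refine tsum_congr fun n => ?_
    rw [ENNReal.toReal_ofReal (hnonneg _ n _)]
    exact (hsum_eq n (ξ n ω)).symm
  · have hGmeas : Measurable fun ω => ⨆ n : ℕ, ((n:ℝ)+1) ^ e * κ' * |ξ n ω| :=
      Measurable.iSup fun n => (hmeas n).abs.const_mul _
    have hmaj : Integrable (fun ω =>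
        1 + (∑' n : ℕ, ENNReal.ofReal (((n:ℝ)+1) ^ (e * p) * K * |ξ n ω| ^ p)).toReal) P :=
      (integrable_const 1).add (integrable_toReal_of_lintegral_ne_top h2meas.aemeasurable hT2)
    refine Integrable.mono' hmaj hGmeas.aestronglyMeasurable ?_
    refine hae.mono fun ω hω => ?_
    have hb := hbound ω hω
    have hbdd : BddAbove (Set.range fun n : ℕ => ((n:ℝ)+1) ^ e * κ' * |ξ n ω|) := by
      refine ⟨max 1 ((∑' n : ℕ, ENNReal.ofReal (((n:ℝ)+1) ^ (e * p) * K * |ξ n ω| ^ p)).toReal), ?_⟩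
      rintro x ⟨n, rfl⟩
      exact hb n
    have hsup_le : (⨆ n : ℕ, ((n:ℝ)+1) ^ e * κ' * |ξ n ω|)
        ≤ max 1 ((∑' n : ℕ, ENNReal.ofReal (((n:ℝ)+1) ^ (e * p) * K * |ξ n ω| ^ p)).toReal) :=
      ciSup_le hb
    have hsup_ge : 0 ≤ ⨆ n : ℕ, ((n:ℝ)+1) ^ e * κ' * |ξ n ω| := by
      refine le_trans ?_ (le_ciSup hbdd 0)
      exact mul_nonneg (mul_nonneg (Real.rpow_nonneg (by positivity) _) hκ'0.le) (abs_nonneg _)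
    rw [Real.norm_eq_abs, abs_of_nonneg hsup_ge]
    have hS0 : 0 ≤ (∑' n : ℕ, ENNReal.ofReal (((n:ℝ)+1) ^ (e * p) * K * |ξ n ω| ^ p)).toReal :=
      ENNReal.toReal_nonneg
    calc (⨆ n : ℕ, ((n:ℝ)+1) ^ e * κ' * |ξ n ω|) ≤ _ := hsup_le
      _ ≤ _ := by
        apply max_le <;> linarith
  · refine hae.mono fun ω hω => ?_
    refine ⟨max 1 ((∑' n : ℕ, ENNReal.ofReal (((n:ℝ)+1) ^ (e * p) * K * |ξ n ω| ^ p)).toReal), ?_⟩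
    rintro x ⟨n, rfl⟩
    exact hbound ω hω n
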